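/- Let ω be a nonzero real number and set α₂ = max{1/2, 2√π·ω²}. Let û and v̂ be real double sequences indexed by ℓ ∈ ℕ and m ∈ ℤ, vanishing whenever |m| > ℓ, and assume ∑_{ℓ,m} (ℓ+1) û_{ℓ,m}² < ∞ and ∑_{ℓ,m} (ℓ+1) v̂_{ℓ,m}² < ∞. Then the series a(u,v) := 2√π·ω²·û_{0,0} v̂_{0,0} + ∑_{ℓ≥1} ∑_{|m|≤ℓ} [ℓ(ℓ+1)/(2ℓ+1)] û_{ℓ,m} v̂_{ℓ,m} converges absolutely, and |a(u,v)| ≤ α₂ · (∑_{ℓ,m} (ℓ+1) û_{ℓ,m}²)^{1/2} · (∑_{ℓ,m} (ℓ+1) v̂_{ℓ,m}²)^{1/2}. -/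

import Mathlib

lemma abs_tsum_le_tsum_abs' {ι : Type*} (f : ι → ℝ) (hf : Summable fun i => |f i|) :
    |∑' i, f i| ≤ ∑' i, |f i| := by
  have h := norm_tsum_le_tsum_norm (E := ℝ) (f := f) ?_
  · simpa only [Real.norm_eq_abs] using h
  · simpa only [Real.norm_eq_abs] using hf

lemma tsum_cauchy_schwarz {ι : Type*} (f g : ι → ℝ) (hf : ∀ i, 0 ≤ f i) (hg : ∀ i, 0 ≤ g i)
    (hf2 : Summable fun i => f i ^ 2) (hg2 : Summable fun i => g i ^ 2)
    (hfg : Summable fun i => f i * g i) :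
    ∑' i, f i * g i ≤ Real.sqrt (∑' i, f i ^ 2) * Real.sqrt (∑' i, g i ^ 2) := by
  refine Summable.tsum_le_of_sum_le hfg fun s => ?_
  have h1 : (∑ i ∈ s, f i * g i) ^ 2 ≤ (∑ i ∈ s, f i ^ 2) * ∑ i ∈ s, g i ^ 2 :=
    Finset.sum_mul_sq_le_sq_mul_sq s f g
  have hnn : 0 ≤ ∑ i ∈ s, f i * g i :=
    Finset.sum_nonneg fun i _ => mul_nonneg (hf i) (hg i)
  calc ∑ i ∈ s, f i * g i = Real.sqrt ((∑ i ∈ s, f i * g i) ^ 2) := (Real.sqrt_sq hnn).symm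
    _ ≤ Real.sqrt ((∑ i ∈ s, f i ^ 2) * ∑ i ∈ s, g i ^ 2) := Real.sqrt_le_sqrt h1
    _ = Real.sqrt (∑ i ∈ s, f i ^ 2) * Real.sqrt (∑ i ∈ s, g i ^ 2) :=
        Real.sqrt_mul (Finset.sum_nonneg fun i _ => sq_nonneg _) _
    _ ≤ Real.sqrt (∑' i, f i ^ 2) * Real.sqrt (∑' i, g i ^ 2) :=
        mul_le_mul (Real.sqrt_le_sqrt (Summable.sum_le_tsum s (fun i _ => sq_nonneg (f i)) hf2))
          (Real.sqrt_le_sqrt (Summable.sum_le_tsum s (fun i _ => sq_nonneg (g i)) hg2))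
          (Real.sqrt_nonneg _) (Real.sqrt_nonneg _)

/-- Boundedness of the bilinear form of the hypersingular equation in terms of
spherical harmonic coefficients: the defining series converges absolutely and
`|a(u,v)| ≤ α₂ ‖u‖_{H^{1/2}} ‖v‖_{H^{1/2}}` with `α₂ = max{1/2, 2√π ω²}`. -/
theorem hypersingular_boundedness (ω : ℝ) (hω : ω ≠ 0)
    (uh vh : ℕ → ℤ → ℝ)
    (hu0 : ∀ (ℓ : ℕ) (m : ℤ), (ℓ : ℤ) < |m| → uh ℓ m = 0)
    (hv0 : ∀ (ℓ : ℕ) (m : ℤ), (ℓ : ℤ) < |m| → vh ℓ m = 0)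
    (hus : Summable fun p : ℕ × ℤ => ((p.1 : ℝ) + 1) * (uh p.1 p.2) ^ 2)
    (hvs : Summable fun p : ℕ × ℤ => ((p.1 : ℝ) + 1) * (vh p.1 p.2) ^ 2) :
    Summable (fun p : ℕ × ℤ =>
      |(p.1 : ℝ) * ((p.1 : ℝ) + 1) / (2 * (p.1 : ℝ) + 1) * uh p.1 p.2 * vh p.1 p.2|) ∧
    |2 * Real.sqrt Real.pi * ω ^ 2 * uh 0 0 * vh 0 0 +
        ∑' p : ℕ × ℤ, (p.1 : ℝ) * ((p.1 : ℝ) + 1) / (2 * (p.1 : ℝ) + 1) *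
          uh p.1 p.2 * vh p.1 p.2|
      ≤ max (1 / 2) (2 * Real.sqrt Real.pi * ω ^ 2) *
        Real.sqrt (∑' p : ℕ × ℤ, ((p.1 : ℝ) + 1) * (uh p.1 p.2) ^ 2) *
        Real.sqrt (∑' p : ℕ × ℤ, ((p.1 : ℝ) + 1) * (vh p.1 p.2) ^ 2) := by
  set α := max (1 / 2 : ℝ) (2 * Real.sqrt Real.pi * ω ^ 2) with hα
  have hα0 : (0 : ℝ) ≤ α := le_trans (by norm_num) (le_max_left _ _)
  -- coefficient bound
  have hcoef : ∀ p : ℕ × ℤ, 0 ≤ (p.1 : ℝ) * ((p.1 : ℝ) + 1) / (2 * (p.1 : ℝ) + 1) ∧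
      (p.1 : ℝ) * ((p.1 : ℝ) + 1) / (2 * (p.1 : ℝ) + 1) ≤ ((p.1 : ℝ) + 1) / 2 := by
    intro p
    have h : (0 : ℝ) ≤ (p.1 : ℝ) := Nat.cast_nonneg _
    constructor
    · positivity
    · rw [div_le_div_iff₀ (by positivity) (by norm_num)]
      nlinarith
  -- pointwise bound by (1/2)(ℓ+1)|u||v|
  have hpt : ∀ p : ℕ × ℤ,
      |(p.1 : ℝ) * ((p.1 : ℝ) + 1) / (2 * (p.1 : ℝ) + 1) * uh p.1 p.2 * vh p.1 p.2|
        ≤ 1 / 2 * (((p.1 : ℝ) + 1) * (|uh p.1 p.2| * |vh p.1 p.2|)) := by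
    intro p
    rw [abs_mul, abs_mul, abs_of_nonneg (hcoef p).1]
    have h2 := (hcoef p).2
    have := abs_nonneg (uh p.1 p.2)
    have := abs_nonneg (vh p.1 p.2)
    nlinarith [mul_nonneg (abs_nonneg (uh p.1 p.2)) (abs_nonneg (vh p.1 p.2))]
  -- summability of (ℓ+1)|u||v|
  have hsumW : Summable fun p : ℕ × ℤ => ((p.1 : ℝ) + 1) * (|uh p.1 p.2| * |vh p.1 p.2|) := by
    refine Summable.of_nonneg_of_le (fun p => by positivity)
      (fun p => ?_) (((hus.add hvs).mul_left (1 / 2)))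
    have h : |uh p.1 p.2| * |vh p.1 p.2| ≤ (uh p.1 p.2 ^ 2 + vh p.1 p.2 ^ 2) / 2 := by
      nlinarith [sq_abs (uh p.1 p.2), sq_abs (vh p.1 p.2),
        sq_nonneg (|uh p.1 p.2| - |vh p.1 p.2|)]
    have hl : (0:ℝ) ≤ (p.1 : ℝ) + 1 := by positivity
    calc ((p.1 : ℝ) + 1) * (|uh p.1 p.2| * |vh p.1 p.2|)
        ≤ ((p.1 : ℝ) + 1) * ((uh p.1 p.2 ^ 2 + vh p.1 p.2 ^ 2) / 2) := by gcongr
      _ = 1 / 2 * (((p.1 : ℝ) + 1) * uh p.1 p.2 ^ 2 + ((p.1 : ℝ) + 1) * vh p.1 p.2 ^ 2) := by ring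
  have hsum : Summable (fun p : ℕ × ℤ =>
      |(p.1 : ℝ) * ((p.1 : ℝ) + 1) / (2 * (p.1 : ℝ) + 1) * uh p.1 p.2 * vh p.1 p.2|) :=
    Summable.of_nonneg_of_le (fun p => abs_nonneg _) hpt (hsumW.mul_left (1 / 2))
  refine ⟨hsum, ?_⟩
  -- h p := α (ℓ+1)|u||v|
  set h : ℕ × ℤ → ℝ := fun p => α * (((p.1 : ℝ) + 1) * (|uh p.1 p.2| * |vh p.1 p.2|)) with hh
  have hhs : Summable h := hsumW.mul_left α
  have hsplit : ∑' p, h p = h (0, 0) + ∑' p : ℕ × ℤ, if p = (0, 0) then 0 else h p :=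
    Summable.tsum_eq_add_tsum_ite hhs (0, 0)
  -- main chain
  have step1 : |2 * Real.sqrt Real.pi * ω ^ 2 * uh 0 0 * vh 0 0 +
        ∑' p : ℕ × ℤ, (p.1 : ℝ) * ((p.1 : ℝ) + 1) / (2 * (p.1 : ℝ) + 1) *
          uh p.1 p.2 * vh p.1 p.2| ≤ ∑' p, h p := by
    rw [hsplit]
    refine le_trans (abs_add_le _ _) (add_le_add ?_ ?_)
    · rw [abs_mul, abs_mul]
      have hπ : 0 ≤ 2 * Real.sqrt Real.pi * ω ^ 2 := by positivity
      rw [abs_of_nonneg hπ]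
      have : 2 * Real.sqrt Real.pi * ω ^ 2 ≤ α := le_max_right _ _
      simp only [hh]
      have h00 := mul_nonneg (abs_nonneg (uh 0 0)) (abs_nonneg (vh 0 0))
      calc 2 * Real.sqrt Real.pi * ω ^ 2 * |uh 0 0| * |vh 0 0|
          ≤ α * |uh 0 0| * |vh 0 0| := by
            have := abs_nonneg (uh 0 0); have := abs_nonneg (vh 0 0); nlinarith
        _ = α * ((((0:ℕ) : ℝ) + 1) * (|uh 0 0| * |vh 0 0|)) := by norm_num; ring
    · have habs : |∑' p : ℕ × ℤ, (p.1 : ℝ) * ((p.1 : ℝ) + 1) / (2 * (p.1 : ℝ) + 1) *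
          uh p.1 p.2 * vh p.1 p.2| ≤ ∑' p : ℕ × ℤ,
          |(p.1 : ℝ) * ((p.1 : ℝ) + 1) / (2 * (p.1 : ℝ) + 1) * uh p.1 p.2 * vh p.1 p.2| :=
        abs_tsum_le_tsum_abs' _ hsum
      refine le_trans habs (Summable.tsum_le_tsum ?_ hsum ?_)
      · intro p
        split_ifs with hp
        · rw [hp]; norm_num
        · rw [hh]
          refine le_trans (hpt p) ?_
          have : (1:ℝ) / 2 ≤ α := le_max_left _ _
          have hnn : 0 ≤ ((p.1 : ℝ) + 1) * (|uh p.1 p.2| * |vh p.1 p.2|) := by positivity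
          nlinarith
      · refine Summable.of_nonneg_of_le (fun p => ?_) (fun p => ?_) hhs
        · split_ifs
          · exact le_refl 0
          · rw [hh]; positivity
        · split_ifs
          · rw [hh]; positivity
          · exact le_refl _
  -- Cauchy-Schwarz step
  set F : ℕ × ℤ → ℝ := fun p => Real.sqrt ((p.1 : ℝ) + 1) * |uh p.1 p.2| with hF
  set G : ℕ × ℤ → ℝ := fun p => Real.sqrt ((p.1 : ℝ) + 1) * |vh p.1 p.2| with hG
  have hF2 : ∀ p, F p ^ 2 = ((p.1 : ℝ) + 1) * (uh p.1 p.2) ^ 2 := by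
    intro p
    rw [hF, mul_pow, Real.sq_sqrt (by positivity), sq_abs]
  have hG2 : ∀ p, G p ^ 2 = ((p.1 : ℝ) + 1) * (vh p.1 p.2) ^ 2 := by
    intro p
    rw [hG, mul_pow, Real.sq_sqrt (by positivity), sq_abs]
  have hFG : ∀ p, F p * G p = ((p.1 : ℝ) + 1) * (|uh p.1 p.2| * |vh p.1 p.2|) := by
    intro p
    rw [hF, hG]
    rw [show Real.sqrt ((p.1 : ℝ) + 1) * |uh p.1 p.2| * (Real.sqrt ((p.1 : ℝ) + 1) * |vh p.1 p.2|)
      = Real.sqrt ((p.1 : ℝ) + 1) * Real.sqrt ((p.1 : ℝ) + 1) * (|uh p.1 p.2| * |vh p.1 p.2|) by ring,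
      Real.mul_self_sqrt (by positivity)]
  have hcs : ∑' p, F p * G p ≤ Real.sqrt (∑' p, F p ^ 2) * Real.sqrt (∑' p, G p ^ 2) := by
    refine tsum_cauchy_schwarz F G (fun p => by positivity) (fun p => by positivity) ?_ ?_ ?_
    · simpa only [hF2] using hus
    · simpa only [hG2] using hvs
    · simpa only [hFG] using hsumW
  have step2 : ∑' p, h p ≤ α * (Real.sqrt (∑' p : ℕ × ℤ, ((p.1 : ℝ) + 1) * (uh p.1 p.2) ^ 2) *
      Real.sqrt (∑' p : ℕ × ℤ, ((p.1 : ℝ) + 1) * (vh p.1 p.2) ^ 2)) := by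
    rw [hh, tsum_mul_left]
    refine mul_le_mul_of_nonneg_left ?_ hα0
    simp only [← hFG, ← hF2, ← hG2]
    exact hcs
  calc |2 * Real.sqrt Real.pi * ω ^ 2 * uh 0 0 * vh 0 0 +
        ∑' p : ℕ × ℤ, (p.1 : ℝ) * ((p.1 : ℝ) + 1) / (2 * (p.1 : ℝ) + 1) *
          uh p.1 p.2 * vh p.1 p.2| ≤ ∑' p, h p := step1
    _ ≤ _ := by rw [mul_assoc]; exact step2
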